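/- If β ≥ |N_i| for every unit i, then for every z ∈ {0,1}^n the SNIPE weight w_i(z) = ∑_{S⊆N_i, |S|≤β} g(S) ∏_{j∈S} (z_j−p_j)/(p_j(1−p_j)) equals ∏_{j∈N_i} z_j/p_j − ∏_{j∈N_i} (1−z_j)/(1−p_j); consequently SNIPE coincides with the Horvitz–Thompson estimator. -/

import Mathlib

open Finset Real

/-- Value of a Bernoulli treatment bit as a real number. -/
noncomputable def zval : Bool → ℝ := fun b => if b then 1 else 0

/-- Expectation of `f` under `n` mutually independent Bernoulli(`p j`) bits. -/
noncomputable def bexp {n : ℕ} (p : Fin n → ℝ) (f : (Fin n → Bool) → ℝ) : ℝ :=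
  ∑ z : Fin n → Bool, (∏ j, if z j then p j else 1 - p j) * f z

/-- The SNIPE coefficient function `g`. -/
noncomputable def gcoef {n : ℕ} (p : Fin n → ℝ) (S : Finset (Fin n)) : ℝ :=
  if S.Nonempty then (∏ s ∈ S, (1 - p s)) - ∏ s ∈ S, (-p s) else 0

lemma gcoef_eq {n : ℕ} (p : Fin n → ℝ) (S : Finset (Fin n)) :
    gcoef p S = (∏ s ∈ S, (1 - p s)) - ∏ s ∈ S, (-p s) := by
  unfold gcoef
  split
  · rfl
  · next h =>
    rw [Finset.not_nonempty_iff_eq_empty.mp h]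
    simp

lemma sum_powerset_prod {n : ℕ} (N : Finset (Fin n)) (f : Fin n → ℝ) :
    ∑ S ∈ N.powerset, ∏ j ∈ S, f j = ∏ j ∈ N, (1 + f j) := by
  have := Finset.prod_add f (fun _ => (1 : ℝ)) N
  simp only [Finset.prod_const_one, mul_one] at this
  rw [← this]
  simp [add_comm]

theorem stmt11 {n : ℕ} (p : Fin n → ℝ) (hp : ∀ j, 0 < p j ∧ p j < 1)
    (N : Finset (Fin n)) (β : ℕ) (hβ : N.card ≤ β) (z : Fin n → Bool) :
    ∑ S ∈ N.powerset.filter (fun S => S.card ≤ β),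
        gcoef p S * ∏ j ∈ S, ((zval (z j) - p j) / (p j * (1 - p j)))
    = (∏ j ∈ N, (zval (z j) / p j)) - ∏ j ∈ N, ((1 - zval (z j)) / (1 - p j)) := by
  have hfilt : N.powerset.filter (fun S => S.card ≤ β) = N.powerset := by
    apply Finset.filter_true_of_mem
    intro S hS
    exact le_trans (Finset.card_le_card (Finset.mem_powerset.mp hS)) hβ
  rw [hfilt]
  have key : ∀ S ∈ N.powerset,
      gcoef p S * ∏ j ∈ S, ((zval (z j) - p j) / (p j * (1 - p j)))
      = (∏ j ∈ S, ((zval (z j) - p j) / p j))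
        - ∏ j ∈ S, (-(zval (z j) - p j) / (1 - p j)) := by
    intro S hS
    rw [gcoef_eq, sub_mul, ← Finset.prod_mul_distrib, ← Finset.prod_mul_distrib]
    congr 1 <;> apply Finset.prod_congr rfl <;> intro j hj <;>
      obtain ⟨h0, h1⟩ := hp j <;>
      have hne0 : p j ≠ 0 := ne_of_gt h0 <;>
      have hne1 : (1 : ℝ) - p j ≠ 0 := by linarith
    · field_simp
    · field_simp
  rw [Finset.sum_congr rfl key, Finset.sum_sub_distrib,
    sum_powerset_prod, sum_powerset_prod]
  congr 1 <;> apply Finset.prod_congr rfl <;> intro j hj <;>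
    obtain ⟨h0, h1⟩ := hp j <;>
    have hne0 : p j ≠ 0 := ne_of_gt h0 <;>
    have hne1 : (1 : ℝ) - p j ≠ 0 := by linarith
  · field_simp
    ring
  · field_simp
    ring
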